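/- For every n ≥ 6, every group Σ, every group homomorphism f : K_n →* Σ, and every natural number k, the range of f is contained in the k-th term derivedSeries Σ k of the derived series of Σ. (In particular, Hom(K_n, Σ) = Hom(K_n, Σ^{(r)}) where Σ^{(r)} is the stable term of the derived series.) -/

import Mathlib

attribute [local instance] derivedSeries_normal
open scoped commutatorElement


def braidRels (n : ℕ) : Set (FreeGroup (Fin (n - 1))) :=
  {r | (∃ i j : Fin (n - 1), 2 ≤ |(i : ℤ) - (j : ℤ)| ∧
        r = FreeGroup.of i * FreeGroup.of j * (FreeGroup.of i)⁻¹ * (FreeGroup.of j)⁻¹) ∨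
       (∃ i j : Fin (n - 1), |(i : ℤ) - (j : ℤ)| = 1 ∧
        r = FreeGroup.of i * FreeGroup.of j * FreeGroup.of i *
            (FreeGroup.of j)⁻¹ * (FreeGroup.of i)⁻¹ * (FreeGroup.of j)⁻¹)}

/-- The braid group `B n` on `n` strands, presented with generators `σ_1, …, σ_{n-1}`. -/
abbrev BraidGroup (n : ℕ) : Type := PresentedGroup (braidRels n)

/-- The generator `σ_{i+1}` of the braid group. -/
def braidGen {n : ℕ} (i : Fin (n - 1)) : BraidGroup n := PresentedGroup.of i

lemma braid_mk_one {n : ℕ} {r : FreeGroup (Fin (n-1))} (hr : r ∈ braidRels n) :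
    PresentedGroup.mk (braidRels n) r = 1 :=
  (QuotientGroup.eq_one_iff r).mpr (Subgroup.subset_normalClosure hr)

lemma braid_rel_comm {n : ℕ} (i j : Fin (n-1)) (h : 2 ≤ |(i : ℤ) - (j : ℤ)|) :
    braidGen i * braidGen j = braidGen j * braidGen i := by
  have h1 : PresentedGroup.mk (braidRels n)
      (FreeGroup.of i * FreeGroup.of j * (FreeGroup.of i)⁻¹ * (FreeGroup.of j)⁻¹) = 1 :=
    braid_mk_one (Or.inl ⟨i, j, h, rfl⟩)
  simp only [map_mul, map_inv] at h1
  have h2 : braidGen i * braidGen j * (braidGen i)⁻¹ * (braidGen j)⁻¹ = 1 := h1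
  rw [← mul_inv_eq_one]
  group at h2 ⊢
  exact h2

lemma braid_rel_braid {n : ℕ} (i j : Fin (n-1)) (h : |(i : ℤ) - (j : ℤ)| = 1) :
    braidGen i * braidGen j * braidGen i = braidGen j * braidGen i * braidGen j := by
  have h1 : PresentedGroup.mk (braidRels n)
      (FreeGroup.of i * FreeGroup.of j * FreeGroup.of i *
        (FreeGroup.of j)⁻¹ * (FreeGroup.of i)⁻¹ * (FreeGroup.of j)⁻¹) = 1 :=
    braid_mk_one (Or.inr ⟨i, j, h, rfl⟩)
  simp only [map_mul, map_inv] at h1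
  have h2 : braidGen i * braidGen j * braidGen i *
      (braidGen j)⁻¹ * (braidGen i)⁻¹ * (braidGen j)⁻¹ = 1 := h1
  rw [← mul_inv_eq_one]
  group at h2 ⊢
  exact h2

lemma key_lemma {Q : Type*} [Group Q]
    (hQ : ∀ x ∈ commutator Q, ∀ y ∈ commutator Q, Commute x y)
    (a b c : Q) (hab : a * b * a = b * a * b) (hac : a * c = c * a)
    (hbc : b * c = c * b) (hca : c * a⁻¹ ∈ commutator Q) : a = b := by
  set t := b * a⁻¹ with ht_def
  have hacC : Commute a c := hac
  have ht : t ∈ commutator Q := by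
    have e : ⁅a * b, a⁆ = t := by
      rw [commutatorElement_def, ht_def]
      calc a * b * a * (a * b)⁻¹ * a⁻¹ = (a * b * a) * (b⁻¹ * a⁻¹ * a⁻¹) := by group
        _ = (b * a * b) * (b⁻¹ * a⁻¹ * a⁻¹) := by rw [hab]
        _ = b * a⁻¹ := by group
    rw [← e, commutator_def]
    exact Subgroup.commutator_mem_commutator (Subgroup.mem_top _) (Subgroup.mem_top _)
  have htc : Commute t c := by
    show t * c = c * t
    rw [ht_def, mul_assoc, hacC.inv_left.eq, ← mul_assoc, hbc, mul_assoc]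
  have htca : Commute t (c * a⁻¹) := hQ t ht _ hca
  have hta : Commute t a := by
    have h1 : Commute t ((c * a⁻¹)⁻¹ * c) := (htca.inv_right).mul_right htc
    rwa [show (c * a⁻¹)⁻¹ * c = a from by group] at h1
  have hta' : a * t = t * a := hta.eq.symm
  have hb : b = t * a := by rw [ht_def]; group
  have l : a * (t * a) * a = t * (a * a * a) := by
    calc a * (t * a) * a = (a * t) * (a * a) := by group
      _ = (t * a) * (a * a) := by rw [hta']
      _ = t * (a * a * a) := by group
  have r : (t * a) * a * (t * a) = (t * t) * (a * a * a) := by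
    calc (t * a) * a * (t * a) = t * ((a * (a * t)) * a) := by group
      _ = t * ((a * (t * a)) * a) := by rw [hta']
      _ = t * ((a * t) * (a * a)) := by group
      _ = t * ((t * a) * (a * a)) := by rw [hta']
      _ = (t * t) * (a * a * a) := by group
  have h3 : t * (a * a * a) = (t * t) * (a * a * a) := by
    rw [← l, ← r, ← hb]; exact hab
  have ht1 : t = 1 := by
    have h4 : t * 1 = t * t := by rw [mul_one]; exact mul_right_cancel h3
    exact (mul_left_cancel h4).symm
  rw [hb, ht1, one_mul]

lemma braid_diff_mem {Q : Type*} [Group Q] (a b : Q) (hab : a * b * a = b * a * b) :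
    b * a⁻¹ ∈ commutator Q := by
  have e : ⁅a * b, a⁆ = b * a⁻¹ := by
    rw [commutatorElement_def]
    calc a * b * a * (a * b)⁻¹ * a⁻¹ = (a * b * a) * (b⁻¹ * a⁻¹ * a⁻¹) := by group
      _ = (b * a * b) * (b⁻¹ * a⁻¹ * a⁻¹) := by rw [hab]
      _ = b * a⁻¹ := by group
  rw [← e, commutator_def]
  exact Subgroup.commutator_mem_commutator (Subgroup.mem_top _) (Subgroup.mem_top _)

lemma comm_comm_quot {G : Type*} [Group G] :
    ∀ x ∈ commutator (G ⧸ derivedSeries G 2), ∀ y ∈ commutator (G ⧸ derivedSeries G 2),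
      Commute x y := by
  intro x hx y hy
  set π := QuotientGroup.mk' (derivedSeries G 2)
  have hsurj : Function.Surjective π := QuotientGroup.mk'_surjective _
  have hmap : commutator (G ⧸ derivedSeries G 2) = Subgroup.map π (commutator G) := by
    rw [← derivedSeries_one, ← derivedSeries_one, ← map_derivedSeries_eq hsurj]
  rw [hmap] at hx hy
  obtain ⟨u, hu, rfl⟩ := hx
  obtain ⟨v, hv, rfl⟩ := hy
  rw [← commutatorElement_eq_one_iff_commute, ← map_commutatorElement]
  have : ⁅u, v⁆ ∈ derivedSeries G 2 := by
    rw [derivedSeries_succ]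
    exact Subgroup.commutator_mem_commutator (by rwa [derivedSeries_one]) (by rwa [derivedSeries_one])
  rwa [← QuotientGroup.ker_mk' (derivedSeries G 2), MonoidHom.mem_ker] at this

section Quot
variable {n : ℕ}

abbrev BQ (n : ℕ) : Type := BraidGroup n ⧸ derivedSeries (BraidGroup n) 2

def bpi (n : ℕ) : BraidGroup n →* BQ n := QuotientGroup.mk' _

def bs (i : Fin (n - 1)) : BQ n := bpi n (braidGen i)

lemma bs_comm (i j : Fin (n-1)) (h : 2 ≤ |(i : ℤ) - (j : ℤ)|) :
    bs i * bs j = bs j * bs i := by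
  have := congrArg (bpi n) (braid_rel_comm i j h)
  simp only [map_mul] at this; exact this

lemma bs_braid (i j : Fin (n-1)) (h : |(i : ℤ) - (j : ℤ)| = 1) :
    bs i * bs j * bs i = bs j * bs i * bs j := by
  have := congrArg (bpi n) (braid_rel_braid i j h)
  simp only [map_mul] at this; exact this

lemma bs_adj_diff (k : ℕ) (h : k + 1 < n - 1) :
    bs ⟨k+1, h⟩ * (bs ⟨k, Nat.lt_of_succ_lt h⟩ : BQ n)⁻¹ ∈ commutator (BQ n) := by
  apply braid_diff_mem
  apply bs_braid
  have : ((⟨k, Nat.lt_of_succ_lt h⟩ : Fin (n-1)) : ℤ) = (k : ℤ) := rfl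
  have : ((⟨k+1, h⟩ : Fin (n-1)) : ℤ) = (k : ℤ) + 1 := by push_cast; rfl
  simp only [this]
  rw [show (k : ℤ) - ((k : ℤ) + 1) = -1 by ring]
  rfl

lemma bs_zero_diff (h0 : 0 < n - 1) :
    ∀ (k : ℕ) (h : k < n - 1), bs ⟨k, h⟩ * (bs ⟨0, h0⟩ : BQ n)⁻¹ ∈ commutator (BQ n) := by
  intro k
  induction k with
  | zero => intro h; simpa using one_mem (commutator (BQ n))
  | succ k ih =>
    intro h
    have e : bs ⟨k+1, h⟩ * (bs ⟨0, h0⟩ : BQ n)⁻¹ =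
        (bs ⟨k+1, h⟩ * (bs ⟨k, Nat.lt_of_succ_lt h⟩)⁻¹) *
        (bs ⟨k, Nat.lt_of_succ_lt h⟩ * (bs ⟨0, h0⟩)⁻¹) := by group
    rw [e]
    exact mul_mem (bs_adj_diff k h) (ih _)

lemma bs_diff_mem (i j : Fin (n - 1)) :
    bs i * (bs j : BQ n)⁻¹ ∈ commutator (BQ n) := by
  have h0 : 0 < n - 1 := Nat.lt_of_le_of_lt (Nat.zero_le _) i.2
  have e : bs i * (bs j : BQ n)⁻¹ =
      (bs ⟨i.1, i.2⟩ * (bs ⟨0, h0⟩)⁻¹) * (bs ⟨j.1, j.2⟩ * (bs ⟨0, h0⟩)⁻¹)⁻¹ := by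
    simp only [Fin.eta]; group
  rw [e]
  exact mul_mem (bs_zero_diff h0 i.1 i.2) (inv_mem (bs_zero_diff h0 j.1 j.2))

end Quot

section Main
variable {n : ℕ}

lemma bs_adj_eq (hn : 6 ≤ n) (k : ℕ) (h : k + 1 < n - 1) :
    (bs ⟨k, Nat.lt_of_succ_lt h⟩ : BQ n) = bs ⟨k+1, h⟩ := by
  have hm : 5 ≤ n - 1 := by omega
  set a : BQ n := bs ⟨k, Nat.lt_of_succ_lt h⟩
  set b : BQ n := bs ⟨k+1, h⟩
  have hab : a * b * a = b * a * b := by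
    apply bs_braid
    have e1 : ((⟨k, Nat.lt_of_succ_lt h⟩ : Fin (n-1)) : ℤ) = (k : ℤ) := rfl
    have e2 : ((⟨k+1, h⟩ : Fin (n-1)) : ℤ) = (k : ℤ) + 1 := by push_cast; rfl
    rw [e1, e2]; rw [show (k : ℤ) - ((k:ℤ)+1) = -1 by ring]; rfl
  by_cases hc : k + 3 < n - 1
  · set c : BQ n := bs ⟨k+3, hc⟩
    have e3 : ((⟨k+3, hc⟩ : Fin (n-1)) : ℤ) = (k : ℤ) + 3 := by push_cast; rfl
    have hac : a * c = c * a := by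
      apply bs_comm
      rw [show ((⟨k, Nat.lt_of_succ_lt h⟩ : Fin (n-1)) : ℤ) = (k:ℤ) from rfl, e3]
      rw [show (k:ℤ) - ((k:ℤ)+3) = -3 by ring]; norm_num
    have hbc : b * c = c * b := by
      apply bs_comm
      rw [show ((⟨k+1, h⟩ : Fin (n-1)) : ℤ) = (k:ℤ)+1 by push_cast; rfl, e3]
      rw [show ((k:ℤ)+1) - ((k:ℤ)+3) = -2 by ring]; norm_num
    exact key_lemma comm_comm_quot a b c hab hac hbc (bs_diff_mem _ _)
  · have hk2 : 2 ≤ k := by omega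
    have hklt : k - 2 < n - 1 := by omega
    set c : BQ n := bs ⟨k-2, hklt⟩
    have e3 : ((⟨k-2, hklt⟩ : Fin (n-1)) : ℤ) = (k : ℤ) - 2 := by
      have : ((⟨k-2, hklt⟩ : Fin (n-1)) : ℕ) = k - 2 := rfl
      omega
    have hac : a * c = c * a := by
      apply bs_comm
      rw [show ((⟨k, Nat.lt_of_succ_lt h⟩ : Fin (n-1)) : ℤ) = (k:ℤ) from rfl, e3]
      rw [show (k:ℤ) - ((k:ℤ)-2) = 2 by ring]; norm_num
    have hbc : b * c = c * b := by
      apply bs_comm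
      rw [show ((⟨k+1, h⟩ : Fin (n-1)) : ℤ) = (k:ℤ)+1 by push_cast; rfl, e3]
      rw [show ((k:ℤ)+1) - ((k:ℤ)-2) = 3 by ring]; norm_num
    exact key_lemma comm_comm_quot a b c hab hac hbc (bs_diff_mem _ _)

lemma bs_all_eq (hn : 6 ≤ n) (h0 : 0 < n - 1) (i : Fin (n - 1)) :
    (bs i : BQ n) = bs ⟨0, h0⟩ := by
  obtain ⟨k, hk⟩ := i
  induction k with
  | zero => rfl
  | succ k ih =>
    rw [← bs_adj_eq hn k hk]
    exact ih (Nat.lt_of_succ_lt hk)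

lemma bq_comm (hn : 6 ≤ n) : ∀ x y : BQ n, Commute x y := by
  have h0 : 0 < n - 1 := by omega
  have hgen : Subgroup.closure (Set.range (bs : Fin (n-1) → BQ n)) = ⊤ := by
    have : Set.range (bs : Fin (n-1) → BQ n) =
        (bpi n) '' (Set.range (braidGen : Fin (n-1) → BraidGroup n)) := by
      rw [← Set.range_comp]; rfl
    rw [this, ← MonoidHom.map_closure]
    rw [show Set.range (braidGen : Fin (n-1) → BraidGroup n) =
        Set.range (PresentedGroup.of : Fin (n-1) → BraidGroup n) from rfl]
    rw [PresentedGroup.closure_range_of]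
    exact Subgroup.map_top_of_surjective _ (QuotientGroup.mk'_surjective _)
  have hsub : Set.range (bs : Fin (n-1) → BQ n) ⊆ {bs ⟨0, h0⟩} := by
    rintro x ⟨i, rfl⟩
    exact bs_all_eq hn h0 i
  have htop : (⊤ : Subgroup (BQ n)) ≤ Subgroup.zpowers (bs ⟨0, h0⟩) := by
    rw [← hgen]
    rw [Subgroup.zpowers_eq_closure]
    exact Subgroup.closure_mono hsub
  intro x y
  obtain ⟨mx, rfl⟩ := Subgroup.mem_zpowers_iff.mp (htop (Subgroup.mem_top x))
  obtain ⟨my, rfl⟩ := Subgroup.mem_zpowers_iff.mp (htop (Subgroup.mem_top y))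
  exact (Commute.refl _).zpow_zpow mx my

lemma braid_commutator_le (hn : 6 ≤ n) :
    commutator (BraidGroup n) ≤ derivedSeries (BraidGroup n) 2 := by
  rw [commutator_def, Subgroup.commutator_le]
  intro g1 _ g2 _
  rw [← QuotientGroup.ker_mk' (derivedSeries (BraidGroup n) 2), MonoidHom.mem_ker]
  rw [show QuotientGroup.mk' (derivedSeries (BraidGroup n) 2) = bpi n from rfl]
  rw [map_commutatorElement, commutatorElement_eq_one_iff_commute]
  exact bq_comm hn _ _

lemma braid_comm_perfect (hn : 6 ≤ n) :
    commutator ↥(commutator (BraidGroup n)) = ⊤ := by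
  set K := commutator (BraidGroup n)
  apply Subgroup.map_injective K.subtype_injective
  have h1 : Subgroup.map K.subtype ⊤ = K := by
    rw [← MonoidHom.range_eq_map, Subgroup.range_subtype]
  rw [commutator_def, Subgroup.map_commutator, h1]
  apply le_antisymm
  · exact Subgroup.commutator_le_left K K
  · have h2 := braid_commutator_le hn
    rwa [derivedSeries_succ, derivedSeries_one] at h2

end Main

/-- For `n ≥ 6`, every homomorphism from the commutator subgroup of the braid group
into a group `S` has range contained in every term of the derived series of `S`. -/
theorem range_le_derivedSeries (n : ℕ) (hn : 6 ≤ n) (S : Type) [Group S]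
    (f : ↥(commutator (BraidGroup n)) →* S) (k : ℕ) :
    f.range ≤ derivedSeries S k := by
  induction k with
  | zero => exact le_top
  | succ k ih =>
    rw [derivedSeries_succ]
    have hperf := braid_comm_perfect hn
    have hr : f.range = ⁅f.range, f.range⁆ := by
      calc f.range = Subgroup.map f ⊤ := MonoidHom.range_eq_map f
        _ = Subgroup.map f (commutator ↥(commutator (BraidGroup n))) := by rw [hperf]
        _ = ⁅Subgroup.map f ⊤, Subgroup.map f ⊤⁆ := Subgroup.map_commutator ⊤ ⊤ f
        _ = ⁅f.range, f.range⁆ := by rw [← MonoidHom.range_eq_map]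
    rw [hr]
    exact Subgroup.commutator_mono ih ih
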